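/- arXiv:2205.12213 — 3 statements merged into one kernel-verified Lean document; each statement's English description precedes it below -/
import Mathlib

section
/- Let X, Y be discrete random variables and T a deterministic function of X inducing a partition 𝒮 of the support of X. Then the information loss satisfies I(X,Y) − I(T(X),Y) = Σ_{S ∈ 𝒮} Σ_{x ∈ S} P(x) · KL(P_{Y|x} ‖ P_{Y|S}), where P_{Y|S}(y) = P(y | x ∈ S) is the mixture distribution over the cluster S. -/
open Finset

noncomputable section

/-- Marginal of X under joint P. -/
def margX {α β : Type*} [Fintype β] (P : α → β → ℝ) (x : α) : ℝ := ∑ y, P x y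

/-- Marginal of Y under joint P. -/
def margY {α β : Type*} [Fintype α] (P : α → β → ℝ) (y : β) : ℝ := ∑ x, P x y

/-- Conditional probability P(y|x). -/
def condYX {α β : Type*} [Fintype β] (P : α → β → ℝ) (y : β) (x : α) : ℝ := P x y / margX P x

/-- Conditional probability P(x|y). -/
def condXY {α β : Type*} [Fintype α] (P : α → β → ℝ) (x : α) (y : β) : ℝ := P x y / margY P y

/-- Mutual information of a discrete joint distribution (natural log). -/
def MI {α β : Type*} [Fintype α] [Fintype β] (P : α → β → ℝ) : ℝ :=
  ∑ x, ∑ y, P x y * Real.log (P x y / (margX P x * margY P y))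

/-- Joint distribution of (T(X), Y). -/
def jointT {α β τ : Type*} [Fintype α] [DecidableEq τ] (P : α → β → ℝ) (T : α → τ)
    (t : τ) (y : β) : ℝ :=
  ∑ x ∈ Finset.univ.filter (fun x => T x = t), P x y

/-- Conditional distribution of Y given the cluster T(X) = t. -/
def condYT {α β τ : Type*} [Fintype α] [Fintype β] [DecidableEq τ] (P : α → β → ℝ)
    (T : α → τ) (t : τ) (y : β) : ℝ :=
  jointT P T t y / (∑ x ∈ Finset.univ.filter (fun x => T x = t), margX P x)

/-- Kullback–Leibler divergence (natural log). -/
def KL {β : Type*} [Fintype β] (p q : β → ℝ) : ℝ := ∑ y, p y * Real.log (p y / q y)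

/-- L1 distance between distributions. -/
def D1 {β : Type*} [Fintype β] (p q : β → ℝ) : ℝ := ∑ y, |p y - q y|
/-- Theorem (information-loss decomposition): I(X,Y) − I(T(X),Y) equals the
weighted sum of KL divergences to the cluster mixtures. -/
theorem info_loss_eq_sum_KL {α β τ : Type*} [Fintype α] [Fintype β] [Fintype τ]
    [DecidableEq τ]
    (P : α → β → ℝ) (hP : ∀ x y, 0 < P x y) (hsum : ∑ x, ∑ y, P x y = 1)
    (T : α → τ) :
    MI P - MI (jointT P T)
      = ∑ x, margX P x * KL (fun y => condYX P y x) (fun y => condYT P T (T x) y) := by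

  classical
  -- nonemptiness from hsum
  have hβ : Nonempty β := by
    by_contra h
    rw [not_nonempty_iff] at h
    simp at hsum
  have hmx : ∀ x, 0 < margX P x := fun x =>
    Finset.sum_pos (fun y _ => hP x y) Finset.univ_nonempty
  have hmy : ∀ y, 0 < margY P y := by
    intro y
    have hα : Nonempty α := by
      by_contra h
      rw [not_nonempty_iff] at h
      simp at hsum
    exact Finset.sum_pos (fun x _ => hP x y) Finset.univ_nonempty
  have hQ : ∀ (x : α) (y : β), 0 < jointT P T (T x) y := fun x y =>
    Finset.sum_pos (fun x' _ => hP x' y) ⟨x, by simp⟩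
  have hQ' : ∀ x : α,
      0 < ∑ x' ∈ Finset.univ.filter (fun x' => T x' = T x), margX P x' := fun x =>
    Finset.sum_pos (fun x' _ => hmx x') ⟨x, by simp⟩
  -- marginals of jointT
  have hmargX : ∀ t, margX (jointT P T) t
      = ∑ x ∈ Finset.univ.filter (fun x => T x = t), margX P x := by
    intro t
    unfold margX jointT
    rw [Finset.sum_comm]
  have hmargY : ∀ y, margY (jointT P T) y = margY P y := by
    intro y
    unfold margY jointT
    exact Finset.sum_fiberwise _ _ _
  -- rewrite MI of jointT as a sum over x
  have hMIT : MI (jointT P T) = ∑ x, ∑ y, P x y *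
      Real.log (jointT P T (T x) y / (margX (jointT P T) (T x) * margY P y)) := by
    unfold MI
    have h1 : ∀ t y, jointT P T t y *
        Real.log (jointT P T t y / (margX (jointT P T) t * margY (jointT P T) y))
        = ∑ x ∈ Finset.univ.filter (fun x => T x = t), P x y *
            Real.log (jointT P T t y / (margX (jointT P T) t * margY P y)) := by
      intro t y
      rw [hmargY]
      rw [show jointT P T t y = ∑ x ∈ Finset.univ.filter (fun x => T x = t), P x y from rfl,
        Finset.sum_mul]
    calc ∑ t, ∑ y, jointT P T t y *
          Real.log (jointT P T t y / (margX (jointT P T) t * margY (jointT P T) y))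
        = ∑ t, ∑ y, ∑ x ∈ Finset.univ.filter (fun x => T x = t), P x y *
            Real.log (jointT P T t y / (margX (jointT P T) t * margY P y)) := by
          refine Finset.sum_congr rfl fun t _ => Finset.sum_congr rfl fun y _ => h1 t y
      _ = ∑ t, ∑ x ∈ Finset.univ.filter (fun x => T x = t), ∑ y, P x y *
            Real.log (jointT P T t y / (margX (jointT P T) t * margY P y)) := by
          refine Finset.sum_congr rfl fun t _ => Finset.sum_comm
      _ = ∑ t, ∑ x ∈ Finset.univ.filter (fun x => T x = t), ∑ y, P x y *
            Real.log (jointT P T (T x) y / (margX (jointT P T) (T x) * margY P y)) := by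
          refine Finset.sum_congr rfl fun t _ => Finset.sum_congr rfl fun x hx => ?_
          rw [(Finset.mem_filter.1 hx).2]
      _ = _ := Finset.sum_fiberwise _ _ _
  rw [hMIT]
  unfold MI
  rw [← Finset.sum_sub_distrib]
  refine Finset.sum_congr rfl fun x _ => ?_
  rw [← Finset.sum_sub_distrib]
  unfold KL condYX condYT
  rw [Finset.mul_sum]
  refine Finset.sum_congr rfl fun y _ => ?_
  have hPxy := hP x y
  have hmxx := hmx x
  have hmyy := hmy y
  have hQxy := hQ x y
  have hQ'x := hQ' x
  rw [hmargX]
  have e1 : margX P x * (P x y / margX P x *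
      Real.log (P x y / margX P x /
        (jointT P T (T x) y / ∑ x' ∈ Finset.univ.filter (fun x' => T x' = T x), margX P x')))
      = P x y * Real.log (P x y / margX P x /
        (jointT P T (T x) y / ∑ x' ∈ Finset.univ.filter (fun x' => T x' = T x), margX P x')) := by
    field_simp
  rw [e1]
  rw [← mul_sub]
  congr 1
  rw [Real.log_div (by positivity) (by positivity),
    Real.log_div (by positivity) (by positivity),
    Real.log_div (by positivity) (by positivity),
    Real.log_div (by positivity) (by positivity),
    Real.log_mul (by positivity) (by positivity),
    Real.log_mul (by positivity) (by positivity)]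
  rw [show jointT P T (T x) y / (∑ x' ∈ Finset.univ.filter (fun x' => T x' = T x), margX P x')
      = jointT P T (T x) y * (∑ x' ∈ Finset.univ.filter (fun x' => T x' = T x), margX P x')⁻¹
    from div_eq_mul_inv _ _] at *
  rw [Real.log_mul (by positivity) (by positivity), Real.log_inv]
  ring
end
end

section
/- Let X, Y be discrete random variables and T a deterministic function of X with induced partition 𝒮. For a cluster S = {x_1^S,...,x_{m_S}^S} and index i, let P_i^S be the mixture of the distributions P_{Y|x_j^S} for j ≠ i with weights proportional to P(x_j^S), and let β_i^S = (Σ_{j≠i} P(x_j^S)) / (Σ_j P(x_j^S)). If I(X,Y) − I(T(X),Y) ≤ ε, then Σ_{S∈𝒮} Σ_{i=1}^{m_S} (P(x_i^S)(β_i^S)²/2) · D_1(P_{Y|x_i^S}, P_i^S)² ≤ ε. -/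
open Finset

noncomputable section

/-- Mixture of the conditional distributions of the other members of x's
cluster (weights proportional to their marginals). -/
def Pother {α β τ : Type*} [Fintype α] [Fintype β] [DecidableEq α] [DecidableEq τ]
    (P : α → β → ℝ) (T : α → τ) (x : α) (y : β) : ℝ :=
  (∑ x' ∈ (Finset.univ.filter fun x' => T x' = T x) \ {x}, P x' y) /
    ∑ x' ∈ (Finset.univ.filter fun x' => T x' = T x) \ {x}, margX P x'

/-- The weight β_i of the rest of the cluster. -/
def betaX {α β τ : Type*} [Fintype α] [Fintype β] [DecidableEq α] [DecidableEq τ]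
    (P : α → β → ℝ) (T : α → τ) (x : α) : ℝ :=
  (∑ x' ∈ (Finset.univ.filter fun x' => T x' = T x) \ {x}, margX P x') /
    ∑ x' ∈ Finset.univ.filter fun x' => T x' = T x, margX P x'

/-! ### Auxiliary lemmas -/

/-- The log-sum inequality. -/
lemma log_sum_ineq {ι : Type*} (t : Finset ι) (a b : ι → ℝ)
    (ha : ∀ i ∈ t, 0 < a i) (hb : ∀ i ∈ t, 0 < b i) :
    (∑ i ∈ t, a i) * Real.log ((∑ i ∈ t, a i) / (∑ i ∈ t, b i)) ≤
      ∑ i ∈ t, a i * Real.log (a i / b i) := by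
  rcases t.eq_empty_or_nonempty with rfl | hne
  · simp
  have hA : 0 < ∑ i ∈ t, a i := Finset.sum_pos ha hne
  have hB : 0 < ∑ i ∈ t, b i := Finset.sum_pos hb hne
  set A := ∑ i ∈ t, a i with hAdef
  set B := ∑ i ∈ t, b i with hBdef
  have hw : ∑ i ∈ t, b i / B = 1 := by
    rw [← Finset.sum_div, ← hBdef, div_self hB.ne']
  have hjensen := Real.convexOn_mul_log.map_sum_le (t := t)
      (w := fun i => b i / B) (p := fun i => a i / b i)
      (fun i hi => div_nonneg (hb i hi).le hB.le) hw
      (fun i hi => Set.mem_Ici.2 (div_nonneg (ha i hi).le (hb i hi).le))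
  simp only [smul_eq_mul, Function.comp] at hjensen
  have hsum1 : ∑ i ∈ t, (b i / B) * (a i / b i) = A / B := by
    rw [hAdef, Finset.sum_div]
    refine Finset.sum_congr rfl fun i hi => ?_
    have := (hb i hi).ne'
    field_simp
  have hsum2 : ∑ i ∈ t, (b i / B) * ((a i / b i) * Real.log (a i / b i)) =
      (∑ i ∈ t, a i * Real.log (a i / b i)) / B := by
    rw [Finset.sum_div]
    refine Finset.sum_congr rfl fun i hi => ?_
    have := (hb i hi).ne'
    field_simp
  rw [hsum1, hsum2] at hjensen
  set S := ∑ i ∈ t, a i * Real.log (a i / b i)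
  calc A * Real.log (A / B) = ((A / B) * Real.log (A / B)) * B := by field_simp
    _ ≤ (S / B) * B := mul_le_mul_of_nonneg_right hjensen hB.le
    _ = S := div_mul_cancel₀ S hB.ne'

/-- Binary Pinsker inequality. -/
lemma binary_pinsker {a b : ℝ} (ha0 : 0 < a) (ha1 : a < 1) (hb0 : 0 < b) (hb1 : b < 1) :
    2 * (a - b) ^ 2 ≤ a * Real.log (a / b) + (1 - a) * Real.log ((1 - a) / (1 - b)) := by
  set C : ℝ := a * Real.log a + (1 - a) * Real.log (1 - a) with hC
  set g : ℝ → ℝ := fun x => C - (a * Real.log x + ((1 - a) * Real.log (1 - x) + 2 * (a - x) ^ 2))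
    with hgdef
  have ha1' : (0:ℝ) < 1 - a := by linarith
  have hderiv : ∀ x : ℝ, 0 < x → x < 1 →
      HasDerivAt g (-(a * x⁻¹ + ((1 - a) * (-1 / (1 - x)) + 2 * (↑2 * (a - x) ^ 1 * -1)))) x := by
    intro x hx0 hx1
    have h1 : HasDerivAt (fun y : ℝ => a * Real.log y) (a * x⁻¹) x :=
      (Real.hasDerivAt_log hx0.ne').const_mul a
    have h2 : HasDerivAt (fun y : ℝ => (1:ℝ) - y) (-1) x := by
      simpa using (hasDerivAt_id x).const_sub 1
    have h3 : HasDerivAt (fun y : ℝ => (1 - a) * Real.log (1 - y)) ((1 - a) * (-1 / (1 - x))) x :=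
      (h2.log (by linarith)).const_mul (1 - a)
    have h4 : HasDerivAt (fun y : ℝ => (a - y) ^ 2) (↑2 * (a - x) ^ 1 * (-1)) x := by
      have h5 : HasDerivAt (fun y : ℝ => a - y) (-1) x := by
        simpa using (hasDerivAt_id x).const_sub a
      exact h5.pow 2
    exact ((h1.add (h3.add (h4.const_mul 2)))).const_sub C
  have hderiv_eq : ∀ x : ℝ, 0 < x → x < 1 →
      deriv g x = (x - a) * (1 - 2 * x) ^ 2 / (x * (1 - x)) := by
    intro x hx0 hx1
    rw [(hderiv x hx0 hx1).deriv]
    have hx1' : (1:ℝ) - x ≠ 0 := by linarith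
    field_simp
    ring
  have hga : g a = 0 := by simp [hgdef, hC]
  have key : 0 ≤ g b := by
    rcases lt_trichotomy b a with hba | hba | hba
    · have hanti : AntitoneOn g (Set.Icc b a) := by
        apply antitoneOn_of_deriv_nonpos (convex_Icc b a)
        · intro x hx
          obtain ⟨hx1, hx2⟩ := hx
          exact (hderiv x (by linarith) (by linarith)).continuousAt.continuousWithinAt
        · intro x hx
          rw [interior_Icc] at hx
          obtain ⟨hx1, hx2⟩ := hx
          exact ((hderiv x (by linarith) (by linarith)).differentiableAt.differentiableWithinAt)
        · intro x hx
          rw [interior_Icc] at hx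
          obtain ⟨hx1, hx2⟩ := hx
          rw [hderiv_eq x (by linarith) (by linarith)]
          apply div_nonpos_of_nonpos_of_nonneg
          · exact mul_nonpos_of_nonpos_of_nonneg (by linarith) (sq_nonneg _)
          · nlinarith
      have := hanti (Set.left_mem_Icc.2 hba.le) (Set.right_mem_Icc.2 hba.le) hba.le
      linarith [hga ▸ this]
    · rw [hba, hga]
    · have hmono : MonotoneOn g (Set.Icc a b) := by
        apply monotoneOn_of_deriv_nonneg (convex_Icc a b)
        · intro x hx
          obtain ⟨hx1, hx2⟩ := hx
          exact (hderiv x (by linarith) (by linarith)).continuousAt.continuousWithinAt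
        · intro x hx
          rw [interior_Icc] at hx
          obtain ⟨hx1, hx2⟩ := hx
          exact ((hderiv x (by linarith) (by linarith)).differentiableAt.differentiableWithinAt)
        · intro x hx
          rw [interior_Icc] at hx
          obtain ⟨hx1, hx2⟩ := hx
          rw [hderiv_eq x (by linarith) (by linarith)]
          apply div_nonneg
          · exact mul_nonneg (by linarith) (sq_nonneg _)
          · nlinarith
      have := hmono (Set.left_mem_Icc.2 hba.le) (Set.right_mem_Icc.2 hba.le) hba.le
      linarith [hga ▸ this]
  have hlog1 : Real.log (a / b) = Real.log a - Real.log b := Real.log_div ha0.ne' hb0.ne'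
  have hlog2 : Real.log ((1 - a) / (1 - b)) = Real.log (1 - a) - Real.log (1 - b) :=
    Real.log_div (by linarith) (by linarith)
  rw [hlog1, hlog2]
  have : g b = C - (a * Real.log b + ((1 - a) * Real.log (1 - b) + 2 * (a - b) ^ 2)) := rfl
  rw [this, hC] at key
  nlinarith [key]

/-- Pinsker's inequality for discrete distributions. -/
lemma pinsker {β : Type*} [Fintype β] (p q : β → ℝ) (hp : ∀ y, 0 < p y) (hq : ∀ y, 0 < q y)
    (hps : ∑ y, p y = 1) (hqs : ∑ y, q y = 1) : D1 p q ^ 2 / 2 ≤ KL p q := by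
  classical
  set A := Finset.univ.filter (fun y : β => q y ≤ p y) with hA
  set A' := Finset.univ.filter (fun y : β => ¬ q y ≤ p y) with hA'
  set a := ∑ y ∈ A, p y with hadef
  set b := ∑ y ∈ A, q y with hbdef
  have hsplit_p : a + ∑ y ∈ A', p y = 1 := by
    rw [hadef, hA, hA', Finset.sum_filter_add_sum_filter_not, hps]
  have hsplit_q : b + ∑ y ∈ A', q y = 1 := by
    rw [hbdef, hA, hA', Finset.sum_filter_add_sum_filter_not, hqs]
  have hba : b ≤ a := Finset.sum_le_sum fun y hy => (Finset.mem_filter.1 hy).2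
  have hD1 : D1 p q = 2 * (a - b) := by
    rw [D1, ← Finset.sum_filter_add_sum_filter_not Finset.univ (fun y => q y ≤ p y)
      (fun y => |p y - q y|)]
    have h1 : ∑ y ∈ A, |p y - q y| = a - b := by
      rw [hadef, hbdef, ← Finset.sum_sub_distrib]
      exact Finset.sum_congr rfl fun y hy =>
        abs_of_nonneg (sub_nonneg.2 (Finset.mem_filter.1 hy).2)
    have h2 : ∑ y ∈ A', |p y - q y| = (1 - b) - (1 - a) := by
      rw [show (1:ℝ) - b = ∑ y ∈ A', q y by linarith, show (1:ℝ) - a = ∑ y ∈ A', p y by linarith,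
        ← Finset.sum_sub_distrib]
      refine Finset.sum_congr rfl fun y hy => ?_
      have := (Finset.mem_filter.1 hy).2
      rw [abs_of_neg (by push_neg at this; linarith)]
      ring
    rw [← hA, ← hA', h1, h2]
    ring
  have hKL : a * Real.log (a / b) + (1 - a) * Real.log ((1 - a) / (1 - b)) ≤ KL p q := by
    have k1 := log_sum_ineq A p q (fun y _ => hp y) (fun y _ => hq y)
    have k2 := log_sum_ineq A' p q (fun y _ => hp y) (fun y _ => hq y)
    rw [show (1:ℝ) - a = ∑ y ∈ A', p y by linarith, show (1:ℝ) - b = ∑ y ∈ A', q y by linarith]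
    rw [KL, ← Finset.sum_filter_add_sum_filter_not Finset.univ (fun y => q y ≤ p y)
      (fun y => p y * Real.log (p y / q y)), ← hA, ← hA']
    exact add_le_add k1 k2
  rcases eq_or_lt_of_le hba with heq | hlt
  · have hself : ∀ x : ℝ, x * Real.log (x / x) = 0 := by
      intro x
      rcases eq_or_ne x 0 with h | h
      · simp [h]
      · simp [div_self h]
    rw [hD1, ← heq]
    calc (2 * (b - b)) ^ 2 / 2 = 0 := by ring
      _ ≤ KL p q := by
        have := hKL
        rw [← heq] at this
        simpa [hself] using this
  · have hAne : A.Nonempty := by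
      by_contra h
      rw [Finset.not_nonempty_iff_eq_empty] at h
      rw [hadef, hbdef, h] at hlt
      simp at hlt
    have hA'ne : A'.Nonempty := by
      by_contra h
      rw [Finset.not_nonempty_iff_eq_empty] at h
      rw [h] at hsplit_p hsplit_q
      simp at hsplit_p hsplit_q
      nlinarith
    have hb0 : 0 < b := Finset.sum_pos (fun y _ => hq y) hAne
    have ha1 : a < 1 := by
      have : 0 < ∑ y ∈ A', p y := Finset.sum_pos (fun y _ => hp y) hA'ne
      linarith
    have hb1 : b < 1 := by
      have : 0 < ∑ y ∈ A', q y := Finset.sum_pos (fun y _ => hq y) hA'ne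
      linarith
    have ha0 : 0 < a := lt_trans hb0 hlt
    calc D1 p q ^ 2 / 2 = 2 * (a - b) ^ 2 := by rw [hD1]; ring
      _ ≤ a * Real.log (a / b) + (1 - a) * Real.log ((1 - a) / (1 - b)) :=
        binary_pinsker ha0 ha1 hb0 hb1
      _ ≤ KL p q := hKL

/-- Chain-rule decomposition of the information loss. -/
lemma loss_decomp {α β τ : Type*} [Fintype α] [Fintype β] [Fintype τ] [DecidableEq τ]
    (P : α → β → ℝ) (hP : ∀ x y, 0 < P x y) (T : α → τ)
    (hαne : (Finset.univ : Finset α).Nonempty) (hβne : (Finset.univ : Finset β).Nonempty) :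
    ∑ x, margX P x * KL (fun y => condYX P y x) (condYT P T (T x)) =
      MI P - MI (jointT P T) := by
  classical
  have hm : ∀ x, 0 < margX P x := fun x => Finset.sum_pos (fun y _ => hP x y) hβne
  have hg : ∀ y, 0 < margY P y := fun y => Finset.sum_pos (fun x _ => hP x y) hαne
  have hMpos : ∀ x : α, 0 < ∑ x' ∈ Finset.univ.filter (fun x' => T x' = T x), margX P x' :=
    fun x => Finset.sum_pos (fun x' _ => hm x')
      ⟨x, Finset.mem_filter.2 ⟨Finset.mem_univ x, rfl⟩⟩
  have hjT : ∀ (x : α) (y : β), 0 < jointT P T (T x) y := fun x y =>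
    Finset.sum_pos (fun x' _ => hP x' y) ⟨x, Finset.mem_filter.2 ⟨Finset.mem_univ x, rfl⟩⟩
  have hmargX_jT : ∀ t, margX (jointT P T) t =
      ∑ x ∈ Finset.univ.filter (fun x => T x = t), margX P x := by
    intro t
    exact Finset.sum_comm
  have hmargY_jT : ∀ y, margY (jointT P T) y = margY P y := by
    intro y
    exact Finset.sum_fiberwise_of_maps_to (fun x _ => Finset.mem_univ (T x)) _
  set L : τ → β → ℝ := fun t y => Real.log (jointT P T t y /
      ((∑ x ∈ Finset.univ.filter (fun x => T x = t), margX P x) * margY P y)) with hL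
  have hMI_jT : MI (jointT P T) = ∑ x, ∑ y, P x y * L (T x) y := by
    rw [MI]
    have step1 : ∀ t, ∑ y, jointT P T t y *
        Real.log (jointT P T t y / (margX (jointT P T) t * margY (jointT P T) y)) =
        ∑ y, ∑ x ∈ Finset.univ.filter (fun x => T x = t), P x y * L t y := by
      intro t
      refine Finset.sum_congr rfl fun y _ => ?_
      rw [hmargX_jT, hmargY_jT, ← Finset.sum_mul]
      simp only [hL]
      rfl
    calc ∑ t, ∑ y, jointT P T t y *
          Real.log (jointT P T t y / (margX (jointT P T) t * margY (jointT P T) y))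
        = ∑ t, ∑ y, ∑ x ∈ Finset.univ.filter (fun x => T x = t), P x y * L t y :=
          Finset.sum_congr rfl fun t _ => step1 t
      _ = ∑ y, ∑ t, ∑ x ∈ Finset.univ.filter (fun x => T x = t), P x y * L t y :=
          Finset.sum_comm
      _ = ∑ y, ∑ x, P x y * L (T x) y := by
          refine Finset.sum_congr rfl fun y _ => ?_
          calc ∑ t, ∑ x ∈ Finset.univ.filter (fun x => T x = t), P x y * L t y
              = ∑ t, ∑ x ∈ Finset.univ.filter (fun x => T x = t), P x y * L (T x) y := by
                refine Finset.sum_congr rfl fun t _ => Finset.sum_congr rfl fun x hx => ?_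
                rw [(Finset.mem_filter.1 hx).2]
            _ = ∑ x, P x y * L (T x) y :=
                Finset.sum_fiberwise_of_maps_to (fun x _ => Finset.mem_univ (T x)) _
      _ = ∑ x, ∑ y, P x y * L (T x) y := Finset.sum_comm
  have key : ∀ x y, P x y * Real.log (condYX P y x / condYT P T (T x) y) =
      P x y * Real.log (P x y / (margX P x * margY P y)) - P x y * L (T x) y := by
    intro x y
    rw [← mul_sub]
    congr 1
    have h1 : Real.log (P x y / (margX P x * margY P y)) =
        Real.log (P x y) - (Real.log (margX P x) + Real.log (margY P y)) := by
      rw [Real.log_div (hP x y).ne' (mul_pos (hm x) (hg y)).ne',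
        Real.log_mul (hm x).ne' (hg y).ne']
    have h2 : L (T x) y = Real.log (jointT P T (T x) y) -
        (Real.log (∑ x' ∈ Finset.univ.filter (fun x' => T x' = T x), margX P x') +
          Real.log (margY P y)) := by
      simp only [hL]
      rw [Real.log_div (hjT x y).ne' (mul_pos (hMpos x) (hg y)).ne',
        Real.log_mul (hMpos x).ne' (hg y).ne']
    have h3 : Real.log (condYX P y x / condYT P T (T x) y) =
        (Real.log (P x y) - Real.log (margX P x)) -
        (Real.log (jointT P T (T x) y) -
          Real.log (∑ x' ∈ Finset.univ.filter (fun x' => T x' = T x), margX P x')) := by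
      rw [condYX, condYT]
      rw [Real.log_div (div_pos (hP x y) (hm x)).ne' (div_pos (hjT x y) (hMpos x)).ne',
        Real.log_div (hP x y).ne' (hm x).ne', Real.log_div (hjT x y).ne' (hMpos x).ne']
    rw [h1, h2, h3]
    ring
  have lhs_eq : ∀ x, margX P x * KL (fun y => condYX P y x) (condYT P T (T x)) =
      ∑ y, P x y * Real.log (condYX P y x / condYT P T (T x) y) := by
    intro x
    rw [KL, Finset.mul_sum]
    refine Finset.sum_congr rfl fun y _ => ?_
    rw [condYX]
    have := (hm x).ne'
    field_simp
  calc ∑ x, margX P x * KL (fun y => condYX P y x) (condYT P T (T x))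
      = ∑ x, ∑ y, P x y * Real.log (condYX P y x / condYT P T (T x) y) :=
        Finset.sum_congr rfl fun x _ => lhs_eq x
    _ = ∑ x, ∑ y, (P x y * Real.log (P x y / (margX P x * margY P y)) - P x y * L (T x) y) :=
        Finset.sum_congr rfl fun x _ => Finset.sum_congr rfl fun y _ => key x y
    _ = MI P - MI (jointT P T) := by
        rw [hMI_jT, MI, ← Finset.sum_sub_distrib]
        exact Finset.sum_congr rfl fun x _ => by rw [← Finset.sum_sub_distrib]

/-- Theorem: if the information loss is at most ε, then the weighted squared L1
distances of each member's translation distribution to the mixture of the rest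
of its cluster sum to at most ε. -/
theorem IB_pairwise_L1_bound {α β τ : Type*} [Fintype α] [Fintype β] [Fintype τ]
    [DecidableEq α] [DecidableEq τ]
    (P : α → β → ℝ) (hP : ∀ x y, 0 < P x y) (hsum : ∑ x, ∑ y, P x y = 1)
    (T : α → τ) (ε : ℝ) (hloss : MI P - MI (jointT P T) ≤ ε) :
    ∑ x, margX P x * betaX P T x ^ 2 / 2 *
        D1 (fun y => condYX P y x) (Pother P T x) ^ 2 ≤ ε := by
  
  classical
  have hβne : (Finset.univ : Finset β).Nonempty := by
    by_contra h
    rw [Finset.not_nonempty_iff_eq_empty] at h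
    simp [h] at hsum
  have hαne : (Finset.univ : Finset α).Nonempty := by
    by_contra h
    rw [Finset.not_nonempty_iff_eq_empty] at h
    simp [h] at hsum
  have hm : ∀ x, 0 < margX P x := fun x => Finset.sum_pos (fun y _ => hP x y) hβne
  have hMpos : ∀ x : α, 0 < ∑ x' ∈ Finset.univ.filter (fun x' => T x' = T x), margX P x' :=
    fun x => Finset.sum_pos (fun x' _ => hm x')
      ⟨x, Finset.mem_filter.2 ⟨Finset.mem_univ x, rfl⟩⟩
  have hjT : ∀ (x : α) (y : β), 0 < jointT P T (T x) y := fun x y =>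
    Finset.sum_pos (fun x' _ => hP x' y) ⟨x, Finset.mem_filter.2 ⟨Finset.mem_univ x, rfl⟩⟩
  -- per-element facts about the conditional distributions
  have hc_pos : ∀ x y, 0 < condYX P y x := fun x y => div_pos (hP x y) (hm x)
  have hc_sum : ∀ x, ∑ y, condYX P y x = 1 := by
    intro x
    simp only [condYX]
    rw [← Finset.sum_div]
    exact div_self (hm x).ne'
  have hq_pos : ∀ x y, 0 < condYT P T (T x) y := fun x y => div_pos (hjT x y) (hMpos x)
  have hq_sum : ∀ x, ∑ y, condYT P T (T x) y = 1 := by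
    intro x
    simp only [condYT, jointT]
    rw [← Finset.sum_div]
    rw [show (∑ y, ∑ x' ∈ Finset.univ.filter (fun x' => T x' = T x), P x' y) =
      ∑ x' ∈ Finset.univ.filter (fun x' => T x' = T x), margX P x' from Finset.sum_comm]
    exact div_self (hMpos x).ne'
  -- the per-element bound
  have hperx : ∀ x, margX P x * betaX P T x ^ 2 / 2 *
      D1 (fun y => condYX P y x) (Pother P T x) ^ 2 ≤
      margX P x * KL (fun y => condYX P y x) (condYT P T (T x)) := by
    intro x
    have hpinsker : D1 (fun y => condYX P y x) (condYT P T (T x)) ^ 2 / 2 ≤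
        KL (fun y => condYX P y x) (condYT P T (T x)) :=
      pinsker _ _ (fun y => hc_pos x y) (fun y => hq_pos x y) (hc_sum x) (hq_sum x)
    have hxmem : x ∈ Finset.univ.filter (fun x' => T x' = T x) :=
      Finset.mem_filter.2 ⟨Finset.mem_univ x, rfl⟩
    set R := ∑ x' ∈ (Finset.univ.filter fun x' => T x' = T x) \ {x}, margX P x' with hR
    have hR0 : 0 ≤ R := Finset.sum_nonneg fun x' _ => (hm x').le
    have hMsplit : (∑ x' ∈ Finset.univ.filter (fun x' => T x' = T x), margX P x') =
        R + margX P x := by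
      rw [hR, Finset.sum_eq_sum_sdiff_singleton_add hxmem]
    have hjsplit : ∀ y, jointT P T (T x) y =
        (∑ x' ∈ (Finset.univ.filter fun x' => T x' = T x) \ {x}, P x' y) + P x y := by
      intro y
      rw [jointT, Finset.sum_eq_sum_sdiff_singleton_add hxmem]
    rcases eq_or_lt_of_le hR0 with hRzero | hRpos
    · -- x is alone in its cluster: β = 0 and the LHS vanishes
      have hbeta0 : betaX P T x = 0 := by
        rw [betaX, ← hR, ← hRzero]
        simp
      rw [hbeta0]
      have h1 : margX P x * (0:ℝ) ^ 2 / 2 * D1 (fun y => condYX P y x) (Pother P T x) ^ 2 = 0 :=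
        by ring
      rw [h1]
      exact mul_nonneg (hm x).le (le_trans (by positivity) hpinsker)
    · -- the generic case: the cluster conditional is a mixture
      have hRne : R ≠ 0 := (ne_of_gt hRpos)
      have hmix : ∀ y, condYT P T (T x) y =
          (1 - betaX P T x) * condYX P y x + betaX P T x * Pother P T x y := by
        intro y
        rw [condYT, condYX, Pother, betaX, hjsplit y, hMsplit, ← hR]
        have h1 := (hm x).ne'
        have h2 : R + margX P x ≠ 0 := ne_of_gt (by linarith [hm x])
        field_simp
        ring
      have hbeta_nonneg : 0 ≤ betaX P T x := by
        rw [betaX, ← hR]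
        exact div_nonneg hR0 (hMpos x).le
      have hD1eq : D1 (fun y => condYX P y x) (condYT P T (T x)) =
          betaX P T x * D1 (fun y => condYX P y x) (Pother P T x) := by
        simp only [D1]
        rw [Finset.mul_sum]
        refine Finset.sum_congr rfl fun y _ => ?_
        rw [hmix y, show condYX P y x -
            ((1 - betaX P T x) * condYX P y x + betaX P T x * Pother P T x y) =
            betaX P T x * (condYX P y x - Pother P T x y) from by ring,
          abs_mul, abs_of_nonneg hbeta_nonneg]
      calc margX P x * betaX P T x ^ 2 / 2 *
            D1 (fun y => condYX P y x) (Pother P T x) ^ 2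
          = margX P x *
            ((betaX P T x * D1 (fun y => condYX P y x) (Pother P T x)) ^ 2 / 2) := by ring
        _ = margX P x * (D1 (fun y => condYX P y x) (condYT P T (T x)) ^ 2 / 2) := by
            rw [hD1eq]
        _ ≤ margX P x * KL (fun y => condYX P y x) (condYT P T (T x)) :=
            mul_le_mul_of_nonneg_left hpinsker (hm x).le
  calc ∑ x, margX P x * betaX P T x ^ 2 / 2 *
        D1 (fun y => condYX P y x) (Pother P T x) ^ 2
      ≤ ∑ x, margX P x * KL (fun y => condYX P y x) (condYT P T (T x)) :=
        Finset.sum_le_sum fun x _ => hperx x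
    _ = MI P - MI (jointT P T) := loss_decomp P hP T hαne hβne
    _ ≤ ε := hloss
end
end

section
/- Let X, Y be discrete random variables with all conditional distributions defined, and let x_1, x_2 be two points of the support of X. Let T merge exactly x_1 and x_2 (T(x) = x for x ∉ {x_1,x_2}, T(x_1) = T(x_2)). Then I(X,Y) − I(T(X),Y) = P(x_1) KL(P_{Y|x_1} ‖ M) + P(x_2) KL(P_{Y|x_2} ‖ M) ≥ [P(x_1)P(x_2)/(2(P(x_1)+P(x_2)))] · D_1(P_{Y|x_1}, P_{Y|x_2})², where M = (P(x_1)P_{Y|x_1} + P(x_2)P_{Y|x_2})/(P(x_1)+P(x_2)). -/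
open Finset

noncomputable section

section auxiliary


lemma aux_h_mono : MonotoneOn (fun t : ℝ => (t+1) * Real.log t - 2*(t-1)) (Set.Ioi 0) := by
  have : ∀ x ∈ interior (Set.Ioi (0:ℝ)),
      HasDerivAt (fun t : ℝ => (t+1) * Real.log t - 2*(t-1)) (Real.log x + x⁻¹ - 1) x := by
    intro x hx
    rw [interior_Ioi] at hx
    have hx0 : x ≠ 0 := ne_of_gt hx
    have h1 : HasDerivAt (fun t : ℝ => (t+1) * Real.log t)
        (1 * Real.log x + (x+1) * x⁻¹) x :=
      ((hasDerivAt_id x).add_const 1).mul (Real.hasDerivAt_log hx0)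
    have h2 := (h1.sub (((hasDerivAt_id x).sub_const 1).const_mul 2))
    refine h2.congr_deriv ?_
    field_simp
    ring
  apply monotoneOn_of_deriv_nonneg (convex_Ioi 0)
  · apply ContinuousOn.sub
    · exact (continuousOn_id.add continuousOn_const).mul
        (Real.continuousOn_log.mono (by intro x hx; simp; exact ne_of_gt hx))
    · fun_prop
  · intro x hx
    exact (this x hx).differentiableAt.differentiableWithinAt
  · intro x hx
    rw [(this x hx).deriv]
    rw [interior_Ioi] at hx
    have := Real.log_le_sub_one_of_pos (x := x⁻¹) (inv_pos.mpr hx)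
    rw [Real.log_inv] at this
    linarith

lemma aux_g_deriv (x : ℝ) (hx : 0 < x) :
    HasDerivAt (fun t : ℝ => (2*t+4)*(t*Real.log t - t + 1) - 3*(t-1)^2)
      (4*((x+1) * Real.log x - 2*(x-1))) x := by
  have hx0 : x ≠ 0 := ne_of_gt hx
  have h1 : HasDerivAt (fun t : ℝ => t * Real.log t - t + 1)
      (Real.log x + 1 - 1) x :=
    ((Real.hasDerivAt_mul_log hx0).sub (hasDerivAt_id x)).add_const 1
  have h2 : HasDerivAt (fun t : ℝ => 2*t+4) 2 x := by
    simpa using ((hasDerivAt_id x).const_mul 2).add_const 4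
  have h3 : HasDerivAt (fun t : ℝ => (t-1)^2) (2*(x-1)) x := by
    simpa using ((hasDerivAt_id x).sub_const 1).fun_pow 2
  have := (h2.mul h1).sub (h3.const_mul 3)
  refine this.congr_deriv ?_
  ring

lemma aux_g_cont : ContinuousOn
    (fun t : ℝ => (2*t+4)*(t*Real.log t - t + 1) - 3*(t-1)^2) {(0:ℝ)}ᶜ := by
  apply ContinuousOn.sub
  · apply ContinuousOn.mul
    · fun_prop
    · exact ((continuousOn_id.mul Real.continuousOn_log).sub continuousOn_id).add
        continuousOn_const
  · fun_prop

lemma aux_one_var (t : ℝ) (ht : 0 < t) :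
    3*(t-1)^2 ≤ (2*t+4)*(t*Real.log t - t + 1) := by
  set g : ℝ → ℝ := fun t => (2*t+4)*(t*Real.log t - t + 1) - 3*(t-1)^2 with hg
  have hg1 : g 1 = 0 := by simp [hg]
  have key : 0 ≤ g t := by
    rcases le_or_gt 1 t with h | h
    · have mono : MonotoneOn g (Set.Ici 1) := by
        apply monotoneOn_of_deriv_nonneg (convex_Ici 1)
        · exact aux_g_cont.mono (by intro x hx; simp at hx ⊢; intro h0; rw [h0] at hx; linarith)
        · intro x hx
          rw [interior_Ici] at hx
          exact (aux_g_deriv x (by linarith [hx.out])).differentiableAt.differentiableWithinAt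
        · intro x hx
          rw [interior_Ici] at hx
          have hx1 : (1:ℝ) < x := hx
          rw [(aux_g_deriv x (by linarith)).deriv]
          have := aux_h_mono (Set.mem_Ioi.mpr one_pos) (Set.mem_Ioi.mpr (by linarith : (0:ℝ) < x)) hx1.le
          simp at this
          linarith
      have := mono (Set.mem_Ici.mpr le_rfl) (Set.mem_Ici.mpr h) h
      rwa [hg1] at this
    · have anti : AntitoneOn g (Set.Ioc 0 1) := by
        apply antitoneOn_of_deriv_nonpos (convex_Ioc 0 1)
        · exact aux_g_cont.mono (by intro x hx; simp at hx ⊢; intro h0; rw [h0] at hx; exact absurd hx.1 (lt_irrefl 0))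
        · intro x hx
          rw [interior_Ioc] at hx
          exact (aux_g_deriv x hx.1).differentiableAt.differentiableWithinAt
        · intro x hx
          rw [interior_Ioc] at hx
          rw [(aux_g_deriv x hx.1).deriv]
          have := aux_h_mono (Set.mem_Ioi.mpr hx.1) (Set.mem_Ioi.mpr one_pos) hx.2.le
          simp at this
          linarith
      have := anti (Set.mem_Ioc.mpr ⟨ht, h.le⟩) (Set.mem_Ioc.mpr ⟨one_pos, le_rfl⟩) h.le
      rwa [hg1] at this
  simp only [hg] at key
  linarith

lemma aux_pointwise (a b : ℝ) (ha : 0 < a) (hb : 0 < b) :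
    3*(a-b)^2 ≤ (2*a+4*b)*(a*Real.log (a/b) - a + b) := by
  have hb0 : b ≠ 0 := ne_of_gt hb
  have ht : 0 < a / b := div_pos ha hb
  have H := aux_one_var (a/b) ht
  have hH := mul_le_mul_of_nonneg_left H (sq_nonneg b)
  have e1 : b^2 * (3*(a/b-1)^2) = 3*(a-b)^2 := by field_simp
  have e2 : b^2 * ((2*(a/b)+4)*((a/b)*Real.log (a/b) - (a/b) + 1))
      = (2*a+4*b)*(a*Real.log (a/b) - a + b) := by field_simp
  rw [e1, e2] at hH
  exact hH


lemma aux_pinsker {β : Type*} [Fintype β] (p q : β → ℝ)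
    (hp : ∀ y, 0 < p y) (hq : ∀ y, 0 < q y)
    (hp1 : ∑ y, p y = 1) (hq1 : ∑ y, q y = 1) :
    D1 p q ^ 2 ≤ 2 * KL p q := by
  set w : β → ℝ := fun y => (2 * p y + 4 * q y) / 3 with hw
  have hwpos : ∀ y, 0 < w y := fun y => by have := hp y; have := hq y; positivity
  have hwsum : ∑ y, w y = 2 := by
    simp only [hw, div_eq_mul_inv]
    rw [← Finset.sum_mul, Finset.sum_add_distrib, ← Finset.mul_sum, ← Finset.mul_sum,
      hp1, hq1]
    norm_num
  have hCS := Finset.sum_mul_sq_le_sq_mul_sq Finset.univ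
    (fun y => |p y - q y| / Real.sqrt (w y)) (fun y => Real.sqrt (w y))
  have e1 : ∀ y : β, |p y - q y| / Real.sqrt (w y) * Real.sqrt (w y) = |p y - q y| :=
    fun y => div_mul_cancel₀ _ (ne_of_gt (Real.sqrt_pos.mpr (hwpos y)))
  have e2 : ∀ y : β, (Real.sqrt (w y))^2 = w y := fun y => Real.sq_sqrt (hwpos y).le
  have e3 : ∀ y : β, (|p y - q y| / Real.sqrt (w y))^2 = (p y - q y)^2 / w y := by
    intro y; rw [div_pow, sq_abs, e2]
  simp only [e1, e2, e3] at hCS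
  rw [hwsum] at hCS
  have key : ∀ y : β, (p y - q y)^2 / w y ≤ p y * Real.log (p y / q y) - p y + q y := by
    intro y
    rw [div_le_iff₀ (hwpos y)]
    have := aux_pointwise (p y) (q y) (hp y) (hq y)
    have hw3 : (p y * Real.log (p y / q y) - p y + q y) * w y
        = (2 * p y + 4 * q y) * (p y * Real.log (p y / q y) - p y + q y) / 3 := by
      rw [hw]; ring
    rw [hw3]
    linarith
  have hsum2 : ∑ y, ((p y - q y)^2 / w y) ≤ KL p q := by
    calc ∑ y, ((p y - q y)^2 / w y)
        ≤ ∑ y, (p y * Real.log (p y / q y) - p y + q y) :=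
          Finset.sum_le_sum (fun y _ => key y)
      _ = KL p q := by
          rw [Finset.sum_add_distrib, Finset.sum_sub_distrib, hp1, hq1, KL]
          ring
  calc D1 p q ^ 2 = (∑ y, |p y - q y|)^2 := rfl
    _ ≤ (∑ y, ((p y - q y)^2 / w y)) * 2 := hCS
    _ ≤ KL p q * 2 := by linarith
    _ = 2 * KL p q := by ring

lemma aux_identity (A B q u v : ℝ) (hA : 0 < A) (hB : 0 < B) (hq : 0 < q)
    (hu : 0 < u) (hv : 0 < v) :
    A * Real.log (A/(u*q)) + B * Real.log (B/(v*q)) - (A+B) * Real.log ((A+B)/((u+v)*q))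
      = u * ((A/u) * Real.log ((A/u) / ((A+B)/(u+v))))
        + v * ((B/v) * Real.log ((B/v) / ((A+B)/(u+v)))) := by
  have l1 : Real.log (A/(u*q)) = Real.log A - Real.log u - Real.log q := by
    rw [Real.log_div hA.ne' (by positivity), Real.log_mul hu.ne' hq.ne']; ring
  have l2 : Real.log (B/(v*q)) = Real.log B - Real.log v - Real.log q := by
    rw [Real.log_div hB.ne' (by positivity), Real.log_mul hv.ne' hq.ne']; ring
  have l3 : Real.log ((A+B)/((u+v)*q))
      = Real.log (A+B) - Real.log (u+v) - Real.log q := by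
    rw [Real.log_div (by positivity) (by positivity),
      Real.log_mul (by positivity) hq.ne']; ring
  have l4 : Real.log ((A/u) / ((A+B)/(u+v)))
      = Real.log A - Real.log u - (Real.log (A+B) - Real.log (u+v)) := by
    rw [Real.log_div (by positivity) (by positivity), Real.log_div hA.ne' hu.ne',
      Real.log_div (by positivity) (by positivity)]
  have l5 : Real.log ((B/v) / ((A+B)/(u+v)))
      = Real.log B - Real.log v - (Real.log (A+B) - Real.log (u+v)) := by
    rw [Real.log_div (by positivity) (by positivity), Real.log_div hB.ne' hv.ne',
      Real.log_div (by positivity) (by positivity)]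
  rw [l1, l2, l3, l4, l5]
  have e1 : u * (A/u * (Real.log A - Real.log u - (Real.log (A+B) - Real.log (u+v))))
      = A * (Real.log A - Real.log u - (Real.log (A+B) - Real.log (u+v))) := by
    rw [← mul_assoc, mul_div_cancel₀ _ hu.ne']
  have e2 : v * (B/v * (Real.log B - Real.log v - (Real.log (A+B) - Real.log (u+v))))
      = B * (Real.log B - Real.log v - (Real.log (A+B) - Real.log (u+v))) := by
    rw [← mul_assoc, mul_div_cancel₀ _ hv.ne']
  rw [e1, e2]
  ring

end auxiliary

/-- Merging exactly two points: exact information loss and its Pinsker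
lower bound. -/
theorem merge_two_info_loss {α β : Type*} [Fintype α] [Fintype β] [DecidableEq α]
    (P : α → β → ℝ) (hP : ∀ x y, 0 < P x y) (hsum : ∑ x, ∑ y, P x y = 1)
    (x₁ x₂ : α) (hne : x₁ ≠ x₂) :
    MI P - MI (jointT P (fun x => if x = x₂ then x₁ else x))
        = margX P x₁ * KL (fun y => condYX P y x₁)
            (fun y => (margX P x₁ * condYX P y x₁ + margX P x₂ * condYX P y x₂) /
              (margX P x₁ + margX P x₂))
          + margX P x₂ * KL (fun y => condYX P y x₂)
            (fun y => (margX P x₁ * condYX P y x₁ + margX P x₂ * condYX P y x₂) /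
              (margX P x₁ + margX P x₂)) ∧
    margX P x₁ * margX P x₂ / (2 * (margX P x₁ + margX P x₂)) *
        D1 (fun y => condYX P y x₁) (fun y => condYX P y x₂) ^ 2
      ≤ MI P - MI (jointT P (fun x => if x = x₂ then x₁ else x)) := by
  classical
  have hβ : Nonempty β := by
    by_contra h
    rw [not_nonempty_iff] at h
    simp at hsum
  have hα : Nonempty α := ⟨x₁⟩
  have hmx : ∀ x, 0 < margX P x := fun x =>
    Finset.sum_pos (fun y _ => hP x y) Finset.univ_nonempty
  have hmy : ∀ y, 0 < margY P y := fun y =>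
    Finset.sum_pos (fun x _ => hP x y) Finset.univ_nonempty
  have hS : (0:ℝ) < margX P x₁ + margX P x₂ := add_pos (hmx x₁) (hmx x₂)
  set T : α → α := fun x => if x = x₂ then x₁ else x with hT
  set Q : α → β → ℝ := jointT P T with hQdef
  -- fibers
  have f1 : Finset.univ.filter (fun x => T x = x₁) = ({x₁, x₂} : Finset α) := by
    ext z
    simp only [Finset.mem_filter, Finset.mem_univ, true_and, Finset.mem_insert,
      Finset.mem_singleton, hT]
    by_cases hz : z = x₂ <;> simp [hz, hne]
  have f2 : Finset.univ.filter (fun x => T x = x₂) = (∅ : Finset α) := by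
    ext z
    simp only [Finset.mem_filter, Finset.mem_univ, true_and, Finset.notMem_empty,
      iff_false, hT]
    by_cases hz : z = x₂ <;> simp [hz, hne]
  have f3 : ∀ t, t ≠ x₁ → t ≠ x₂ →
      Finset.univ.filter (fun x => T x = t) = ({t} : Finset α) := by
    intro t h1 h2
    ext z
    simp only [Finset.mem_filter, Finset.mem_univ, true_and, Finset.mem_singleton, hT]
    by_cases hz : z = x₂ <;> simp [hz, Ne.symm h1, Ne.symm h2]
  -- values of Q
  have hQ1 : ∀ y, Q x₁ y = P x₁ y + P x₂ y := by
    intro y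
    rw [hQdef]
    unfold jointT
    rw [f1, Finset.sum_insert (Finset.notMem_singleton.mpr hne), Finset.sum_singleton]
  have hQ2 : ∀ y, Q x₂ y = 0 := by
    intro y; rw [hQdef]; unfold jointT; rw [f2, Finset.sum_empty]
  have hQ3 : ∀ t, t ≠ x₁ → t ≠ x₂ → ∀ y, Q t y = P t y := by
    intro t h1 h2 y
    rw [hQdef]; unfold jointT; rw [f3 t h1 h2, Finset.sum_singleton]
  have hQmX1 : margX Q x₁ = margX P x₁ + margX P x₂ := by
    unfold margX
    rw [← Finset.sum_add_distrib]
    exact Finset.sum_congr rfl (fun y _ => hQ1 y)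
  have hQmX3 : ∀ t, t ≠ x₁ → t ≠ x₂ → margX Q t = margX P t := by
    intro t h1 h2
    unfold margX
    exact Finset.sum_congr rfl (fun y _ => hQ3 t h1 h2 y)
  have hQmY : ∀ y, margY Q y = margY P y := by
    intro y
    rw [hQdef]
    unfold margY jointT
    exact Finset.sum_fiberwise Finset.univ T (fun x => P x y)
  -- splitting sums
  have hx₂mem : x₂ ∈ Finset.univ.erase x₁ :=
    Finset.mem_erase.mpr ⟨Ne.symm hne, Finset.mem_univ x₂⟩
  have hsplit : ∀ F : α → ℝ, ∑ x, F x
      = F x₁ + (F x₂ + ∑ x ∈ (Finset.univ.erase x₁).erase x₂, F x) := by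
    intro F
    rw [Finset.add_sum_erase _ F hx₂mem, Finset.add_sum_erase _ F (Finset.mem_univ x₁)]
  have htail : ∑ x ∈ (Finset.univ.erase x₁).erase x₂,
        (∑ y, Q x y * Real.log (Q x y / (margX Q x * margY Q y)))
      = ∑ x ∈ (Finset.univ.erase x₁).erase x₂,
        (∑ y, P x y * Real.log (P x y / (margX P x * margY P y))) := by
    apply Finset.sum_congr rfl
    intro x hx
    have hx2 : x ≠ x₂ := (Finset.mem_erase.mp hx).1
    have hx1 : x ≠ x₁ := (Finset.mem_erase.mp (Finset.mem_erase.mp hx).2).1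
    apply Finset.sum_congr rfl
    intro y _
    rw [hQ3 x hx1 hx2 y, hQmX3 x hx1 hx2, hQmY y]
  have hFQ2 : (∑ y, Q x₂ y * Real.log (Q x₂ y / (margX Q x₂ * margY Q y))) = 0 := by
    apply Finset.sum_eq_zero
    intro y _
    rw [hQ2 y]
    simp
  have hdiff : MI P - MI Q
      = (∑ y, P x₁ y * Real.log (P x₁ y / (margX P x₁ * margY P y)))
        + (∑ y, P x₂ y * Real.log (P x₂ y / (margX P x₂ * margY P y)))
        - (∑ y, (P x₁ y + P x₂ y) * Real.log ((P x₁ y + P x₂ y) /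
            ((margX P x₁ + margX P x₂) * margY P y))) := by
    have e1 : MI P = _ := hsplit (fun x => ∑ y, P x y * Real.log (P x y / (margX P x * margY P y)))
    have e2 : MI Q = _ := hsplit (fun x => ∑ y, Q x y * Real.log (Q x y / (margX Q x * margY Q y)))
    rw [e1, e2, htail, hFQ2]
    have e3 : (∑ y, Q x₁ y * Real.log (Q x₁ y / (margX Q x₁ * margY Q y)))
        = ∑ y, (P x₁ y + P x₂ y) * Real.log ((P x₁ y + P x₂ y) /
            ((margX P x₁ + margX P x₂) * margY P y)) := by
      apply Finset.sum_congr rfl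
      intro y _
      rw [hQ1 y, hQmX1, hQmY y]
    rw [e3]
    ring
  -- the exact identity
  have hid : MI P - MI Q
      = margX P x₁ * KL (fun y => condYX P y x₁)
            (fun y => (margX P x₁ * condYX P y x₁ + margX P x₂ * condYX P y x₂) /
              (margX P x₁ + margX P x₂))
          + margX P x₂ * KL (fun y => condYX P y x₂)
            (fun y => (margX P x₁ * condYX P y x₁ + margX P x₂ * condYX P y x₂) /
              (margX P x₁ + margX P x₂)) := by
    rw [hdiff]
    simp only [KL, condYX]
    rw [Finset.mul_sum, Finset.mul_sum, ← Finset.sum_add_distrib, ← Finset.sum_add_distrib,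
      ← Finset.sum_sub_distrib]
    apply Finset.sum_congr rfl
    intro y _
    have hM : (margX P x₁ * (P x₁ y / margX P x₁) + margX P x₂ * (P x₂ y / margX P x₂)) /
          (margX P x₁ + margX P x₂)
        = (P x₁ y + P x₂ y) / (margX P x₁ + margX P x₂) := by
      rw [mul_div_cancel₀ _ (hmx x₁).ne', mul_div_cancel₀ _ (hmx x₂).ne']
    rw [hM]
    exact aux_identity (P x₁ y) (P x₂ y) (margY P y) (margX P x₁) (margX P x₂)
      (hP x₁ y) (hP x₂ y) (hmy y) (hmx x₁) (hmx x₂)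
  refine ⟨hid, ?_⟩
  rw [hid]
  set pa : β → ℝ := fun y => condYX P y x₁ with hpa
  set pb : β → ℝ := fun y => condYX P y x₂ with hpb
  set pm : β → ℝ := fun y => (margX P x₁ * condYX P y x₁ + margX P x₂ * condYX P y x₂) /
      (margX P x₁ + margX P x₂) with hpm
  have hSne : margX P x₁ + margX P x₂ ≠ 0 := hS.ne'
  have hpa_pos : ∀ y, 0 < pa y := by
    intro y; simp only [hpa, condYX]; exact div_pos (hP x₁ y) (hmx x₁)
  have hpb_pos : ∀ y, 0 < pb y := by
    intro y; simp only [hpb, condYX]; exact div_pos (hP x₂ y) (hmx x₂)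
  have hm_simp : ∀ y, pm y = (P x₁ y + P x₂ y) / (margX P x₁ + margX P x₂) := by
    intro y; simp only [hpm, condYX]
    rw [mul_div_cancel₀ _ (hmx x₁).ne', mul_div_cancel₀ _ (hmx x₂).ne']
  have hpm_pos : ∀ y, 0 < pm y := by
    intro y; rw [hm_simp y]; exact div_pos (add_pos (hP x₁ y) (hP x₂ y)) hS
  have hsuma : ∑ y, pa y = 1 := by
    simp only [hpa, condYX]
    rw [← Finset.sum_div]
    exact div_self (hmx x₁).ne'
  have hsumb : ∑ y, pb y = 1 := by
    simp only [hpb, condYX]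
    rw [← Finset.sum_div]
    exact div_self (hmx x₂).ne'
  have hsumm : ∑ y, pm y = 1 := by
    rw [Finset.sum_congr rfl (fun y _ => hm_simp y), ← Finset.sum_div,
      Finset.sum_add_distrib]
    exact div_self hSne
  have h1 := aux_pinsker pa pm hpa_pos hpm_pos hsuma hsumm
  have h2 := aux_pinsker pb pm hpb_pos hpm_pos hsumb hsumm
  have hda : D1 pa pm = margX P x₂ / (margX P x₁ + margX P x₂) * D1 pa pb := by
    unfold D1
    rw [Finset.mul_sum]
    apply Finset.sum_congr rfl
    intro y _
    have e : pa y - pm y = margX P x₂ / (margX P x₁ + margX P x₂) * (pa y - pb y) := by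
      rw [hm_simp y]; simp only [hpa, hpb, condYX]
      field_simp [(hmx x₁).ne', (hmx x₂).ne']
      ring
    rw [e, abs_mul, abs_of_pos (div_pos (hmx x₂) hS)]
  have hdb : D1 pb pm = margX P x₁ / (margX P x₁ + margX P x₂) * D1 pa pb := by
    unfold D1
    rw [Finset.mul_sum]
    apply Finset.sum_congr rfl
    intro y _
    have e : pb y - pm y = margX P x₁ / (margX P x₁ + margX P x₂) * (pb y - pa y) := by
      rw [hm_simp y]; simp only [hpa, hpb, condYX]
      field_simp [(hmx x₁).ne', (hmx x₂).ne']
      ring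
    rw [e, abs_mul, abs_of_pos (div_pos (hmx x₁) hS), abs_sub_comm]
  rw [hda] at h1
  rw [hdb] at h2
  have hc1 : (0:ℝ) ≤ margX P x₁ / 2 := by linarith [hmx x₁]
  have hc2 : (0:ℝ) ≤ margX P x₂ / 2 := by linarith [hmx x₂]
  have ha1 := mul_le_mul_of_nonneg_left h1 hc1
  have ha2 := mul_le_mul_of_nonneg_left h2 hc2
  have e : margX P x₁ / 2 * ((margX P x₂ / (margX P x₁ + margX P x₂) * D1 pa pb)^2)
      + margX P x₂ / 2 * ((margX P x₁ / (margX P x₁ + margX P x₂) * D1 pa pb)^2)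
      = margX P x₁ * margX P x₂ / (2*(margX P x₁ + margX P x₂)) * D1 pa pb ^ 2 := by
    field_simp
    ring
  have r1 : margX P x₁ / 2 * (2 * KL pa pm) = margX P x₁ * KL pa pm := by ring
  have r2 : margX P x₂ / 2 * (2 * KL pb pm) = margX P x₂ * KL pb pm := by ring
  rw [r1] at ha1
  rw [r2] at ha2
  linarith [ha1, ha2, e]
end
end
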